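/- For every real parameter a, the quartic f(x,y) = x^2 + x^3 + x^2 y + 2a x y^2 + 2a x y^3 + a^2 y^4 is an invariant algebraic curve of Chavarriga's system ẋ = 5x + 6x^2 + 4(1+a)xy + a y^2, ẏ = x + 2y + 4xy + (2+3a)y^2; i.e. there exists a polynomial cofactor k of degree at most 1 with p·f_x + q·f_y = k·f. -/

import Mathlib

/-- The quartic `x² + x³ + x²y + 2axy² + 2axy³ + a²y⁴ = 0` is an invariant algebraic curve of
Chavarriga's system, with a polynomial cofactor of degree at most 1. -/
theorem chavarriga_curve_invariant (a : ℝ) :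
    ∃ k0 k1 k2 : ℝ, ∀ x y : ℝ,
      (5 * x + 6 * x ^ 2 + 4 * (1 + a) * x * y + a * y ^ 2) *
          deriv (fun t : ℝ =>
            t ^ 2 + t ^ 3 + t ^ 2 * y + 2 * a * t * y ^ 2 + 2 * a * t * y ^ 3 + a ^ 2 * y ^ 4) x +
        (x + 2 * y + 4 * x * y + (2 + 3 * a) * y ^ 2) *
          deriv (fun t : ℝ =>
            x ^ 2 + x ^ 3 + x ^ 2 * t + 2 * a * x * t ^ 2 + 2 * a * x * t ^ 3 + a ^ 2 * t ^ 4) y =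
      (k0 + k1 * x + k2 * y) *
        (x ^ 2 + x ^ 3 + x ^ 2 * y + 2 * a * x * y ^ 2 + 2 * a * x * y ^ 3 + a ^ 2 * y ^ 4) := by
  refine ⟨10, 18, 10 + 12 * a, fun x y => ?_⟩
  have h1 : deriv (fun t : ℝ =>
      t ^ 2 + t ^ 3 + t ^ 2 * y + 2 * a * t * y ^ 2 + 2 * a * t * y ^ 3 + a ^ 2 * y ^ 4) x
      = 2 * x + 3 * x ^ 2 + 2 * x * y + 2 * a * y ^ 2 + 2 * a * y ^ 3 := by
    have : HasDerivAt (fun t : ℝ =>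
        t ^ 2 + t ^ 3 + t ^ 2 * y + 2 * a * t * y ^ 2 + 2 * a * t * y ^ 3 + a ^ 2 * y ^ 4)
        (2 * x + 3 * x ^ 2 + 2 * x * y + 2 * a * y ^ 2 + 2 * a * y ^ 3) x := by
      have := (((((hasDerivAt_pow 2 x).add (hasDerivAt_pow 3 x)).add
        ((hasDerivAt_pow 2 x).mul_const y)).add
        ((hasDerivAt_id' x).const_mul (2 * a * y ^ 2))).add
        ((hasDerivAt_id' x).const_mul (2 * a * y ^ 3))).add_const (a ^ 2 * y ^ 4)
      refine (this.congr_deriv (by norm_num)).congr_of_eventuallyEq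
        (Filter.Eventually.of_forall fun t => ?_)
      simp only [Pi.add_apply]; ring
    exact this.deriv
  have h2 : deriv (fun t : ℝ =>
      x ^ 2 + x ^ 3 + x ^ 2 * t + 2 * a * x * t ^ 2 + 2 * a * x * t ^ 3 + a ^ 2 * t ^ 4) y
      = x ^ 2 + 4 * a * x * y + 6 * a * x * y ^ 2 + 4 * a ^ 2 * y ^ 3 := by
    have : HasDerivAt (fun t : ℝ =>
        x ^ 2 + x ^ 3 + x ^ 2 * t + 2 * a * x * t ^ 2 + 2 * a * x * t ^ 3 + a ^ 2 * t ^ 4)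
        (x ^ 2 + 4 * a * x * y + 6 * a * x * y ^ 2 + 4 * a ^ 2 * y ^ 3) y := by
      have := (((((hasDerivAt_const y (x ^ 2)).add (hasDerivAt_const y (x ^ 3))).add
        ((hasDerivAt_id' y).const_mul (x ^ 2))).add
        ((hasDerivAt_pow 2 y).const_mul (2 * a * x))).add
        ((hasDerivAt_pow 3 y).const_mul (2 * a * x))).add
        ((hasDerivAt_pow 4 y).const_mul (a ^ 2))
      refine (this.congr_deriv (by norm_num; ring)).congr_of_eventuallyEq
        (Filter.Eventually.of_forall fun t => ?_)
      simp only [Pi.add_apply]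
    exact this.deriv
  rw [h1, h2]; ring
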